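/- There is a universal constant C > 0 such that for any measurable f: ℝ³×ℝ³ → [0,1] with |p|f ∈ L¹, the density ρ_f = ∫ f(·,p) dp satisfies ‖ρ_f‖_{L^{4/3}(ℝ³)}^{4/3} ≤ C ∫∫ |p| f(q,p) dq dp. -/

import Mathlib

open MeasureTheory

noncomputable section

abbrev E3 := EuclideanSpace ℝ (Fin 3)

def vB : ℝ := (volume (Metric.ball (0:E3) 1)).toReal

lemma vB_pos : 0 < vB := by
  unfold vB
  rw [ENNReal.toReal_pos_iff]
  constructor
  · exact Metric.measure_ball_pos _ _ one_pos
  · exact (MeasureTheory.measure_ball_lt_top (μ := (volume : Measure E3)) (x := (0:E3)) (r := (1:ℝ)))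

lemma ptwise (g : E3 → ℝ) (hg : Measurable g) (h0 : ∀ᵐ p, 0 ≤ g p)
    (h1 : ∀ᵐ p, g p ≤ 1) (hi : Integrable (fun p => ‖p‖ * g p)) :
    (∫ p, g p) ≤ (vB + 1) * (∫ p, ‖p‖ * g p) ^ ((3:ℝ)/4) := by
  set T := ∫ p, ‖p‖ * g p with hT
  have hT0 : 0 ≤ T := integral_nonneg_of_ae (h0.mono fun p hp => mul_nonneg (norm_nonneg _) hp)
  rcases eq_or_lt_of_le hT0 with hTz | hTpos
  · -- T = 0 : g = 0 a.e.
    have hz : (fun p => ‖p‖ * g p) =ᵐ[volume] 0 := by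
      rw [← integral_eq_zero_iff_of_nonneg_ae
        (h0.mono fun p hp => mul_nonneg (norm_nonneg _) hp) hi]
      exact hTz.symm
    have hne : ∀ᵐ p : E3, p ≠ 0 := by
      rw [ae_iff]
      simpa using measure_singleton (0 : E3)
    have hg0 : g =ᵐ[volume] 0 := by
      filter_upwards [hz, hne] with p hp hp0
      have : ‖p‖ ≠ 0 := by simpa using hp0
      have := hp
      simp only [Pi.zero_apply] at this ⊢
      exact (mul_eq_zero.mp this).resolve_left ‹‖p‖ ≠ 0›
    rw [integral_congr_ae hg0, ← hTz]
    simp [Real.zero_rpow (by norm_num : (3:ℝ)/4 ≠ 0)]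
  · set R : ℝ := T ^ ((1:ℝ)/4) with hR
    have hR0 : 0 < R := Real.rpow_pos_of_pos hTpos _
    -- pointwise bound
    have hbound : ∀ᵐ p : E3, g p ≤ (Metric.ball (0:E3) R).indicator (fun _ => (1:ℝ)) p
        + ‖p‖ * g p / R := by
      filter_upwards [h0, h1] with p hp0 hp1
      by_cases hpR : p ∈ Metric.ball (0:E3) R
      · rw [Set.indicator_of_mem hpR]
        have : 0 ≤ ‖p‖ * g p / R := div_nonneg (mul_nonneg (norm_nonneg _) hp0) hR0.le
        linarith
      · rw [Set.indicator_of_notMem hpR]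
        have hnp : R ≤ ‖p‖ := by
          simpa [Metric.mem_ball, dist_eq_norm, not_lt] using hpR
        rw [zero_add, le_div_iff₀ hR0]
        nlinarith [mul_le_mul_of_nonneg_left hnp hp0]
    have hind : Integrable ((Metric.ball (0:E3) R).indicator (fun _ => (1:ℝ))) := by
      apply IntegrableOn.integrable_indicator _ measurableSet_ball
      exact (integrableOn_const_iff).mpr (Or.inr MeasureTheory.measure_ball_lt_top)
    have hbd_int : Integrable (fun p : E3 =>
        (Metric.ball (0:E3) R).indicator (fun _ => (1:ℝ)) p + ‖p‖ * g p / R) :=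
      hind.add (hi.div_const R)
    have hgi : Integrable g := by
      apply hbd_int.mono' hg.aestronglyMeasurable
      filter_upwards [h0, hbound] with p hp0 hb
      rwa [Real.norm_eq_abs, abs_of_nonneg hp0]
    have hle : (∫ p, g p) ≤ ∫ p : E3,
        ((Metric.ball (0:E3) R).indicator (fun _ => (1:ℝ)) p + ‖p‖ * g p / R) :=
      integral_mono_ae hgi hbd_int hbound
    have hsplit : (∫ p : E3,
        ((Metric.ball (0:E3) R).indicator (fun _ => (1:ℝ)) p + ‖p‖ * g p / R))
        = (volume (Metric.ball (0:E3) R)).toReal + T / R := by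
      rw [integral_add hind (hi.div_const R), integral_indicator_const, integral_div]
      · simp only [smul_eq_mul, mul_one]; rfl
      · exact measurableSet_ball
    have hvol : (volume (Metric.ball (0:E3) R)).toReal = R ^ (3:ℕ) * vB := by
      rw [Measure.addHaar_ball volume (0:E3) hR0.le]
      rw [ENNReal.toReal_mul, ENNReal.toReal_ofReal (by positivity)]
      simp [finrank_euclideanSpace_fin, vB]
    have hR3 : R ^ (3:ℕ) = T ^ ((3:ℝ)/4) := by
      rw [hR, ← Real.rpow_natCast (T ^ ((1:ℝ)/4)) 3, ← Real.rpow_mul hT0]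
      norm_num
    have hTR : T / R = T ^ ((3:ℝ)/4) := by
      rw [hR, show (3:ℝ)/4 = 1 - 1/4 by norm_num, Real.rpow_sub hTpos, Real.rpow_one]
    calc (∫ p, g p) ≤ (volume (Metric.ball (0:E3) R)).toReal + T / R := hle.trans hsplit.le
      _ = T ^ ((3:ℝ)/4) * vB + T ^ ((3:ℝ)/4) := by rw [hvol, hR3, hTR]
      _ = (vB + 1) * T ^ ((3:ℝ)/4) := by ring

/-- Endpoint kinetic interpolation inequality:
`‖ρ_f‖_{L^{4/3}}^{4/3} ≤ C ∫∫ |p| f(q,p) dq dp` for `0 ≤ f ≤ 1`. -/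
theorem kinetic_interpolation_endpoint :
    ∃ C > 0, ∀ f : E3 × E3 → ℝ, Measurable f →
      (∀ᵐ x : E3 × E3, 0 ≤ f x) → (∀ᵐ x : E3 × E3, f x ≤ 1) →
      Integrable (fun x : E3 × E3 => ‖x.2‖ * f x) →
      (∫ q : E3, (∫ p : E3, f (q, p)) ^ ((4 : ℝ) / 3)) ≤
        C * ∫ x : E3 × E3, ‖x.2‖ * f x := by
  refine ⟨(vB + 1) ^ ((4:ℝ)/3), by have := vB_pos; positivity, ?_⟩
  intro f hf h0 h1 hi
  set C : ℝ := (vB + 1) ^ ((4:ℝ)/3) with hC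
  rw [Measure.volume_eq_prod] at hi h0 h1 ⊢
  have h0' := Measure.ae_ae_of_ae_prod h0
  have h1' := Measure.ae_ae_of_ae_prod h1
  have hfin := hi.prod_right_ae
  have hTint : Integrable (fun q : E3 => ∫ p : E3, ‖p‖ * f (q, p)) :=
    hi.integral_prod_left
  have key : ∀ᵐ q : E3, (∫ p : E3, f (q, p)) ^ ((4:ℝ)/3)
      ≤ C * ∫ p : E3, ‖p‖ * f (q, p) := by
    filter_upwards [h0', h1', hfin] with q hq0 hq1 hqi
    have hpt := ptwise (fun p => f (q, p)) (hf.comp measurable_prodMk_left) hq0 hq1 hqi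
    set T : ℝ := ∫ p : E3, ‖p‖ * f (q, p) with hT
    have hT0 : 0 ≤ T :=
      integral_nonneg_of_ae (hq0.mono fun p hp => mul_nonneg (norm_nonneg _) hp)
    have hρ0 : 0 ≤ ∫ p : E3, f (q, p) := integral_nonneg_of_ae hq0
    calc (∫ p : E3, f (q, p)) ^ ((4:ℝ)/3)
        ≤ ((vB + 1) * T ^ ((3:ℝ)/4)) ^ ((4:ℝ)/3) :=
          Real.rpow_le_rpow hρ0 hpt (by norm_num)
      _ = C * T := by
          rw [Real.mul_rpow (by have := vB_pos; positivity) (Real.rpow_nonneg hT0 _),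
            ← Real.rpow_mul hT0]
          norm_num [hC]
  have hρ0' : ∀ᵐ q : E3, 0 ≤ ∫ p : E3, f (q, p) :=
    h0'.mono fun q hq => integral_nonneg_of_ae hq
  have hmeas : AEStronglyMeasurable
      (fun q : E3 => (∫ p : E3, f (q, p)) ^ ((4:ℝ)/3)) volume := by
    have hm : StronglyMeasurable fun q : E3 => ∫ p : E3, f (q, p) :=
      hf.stronglyMeasurable.integral_prod_right'
    have : Measurable fun q : E3 => (∫ p : E3, f (q, p)) ^ ((4:ℝ)/3) := by
      have := hm.measurable
      fun_prop
    exact this.aestronglyMeasurable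
  have hLint : Integrable (fun q : E3 => (∫ p : E3, f (q, p)) ^ ((4:ℝ)/3)) := by
    apply (hTint.const_mul C).mono' hmeas
    filter_upwards [key, hρ0'] with q hk h0q
    rwa [Real.norm_eq_abs, abs_of_nonneg (Real.rpow_nonneg h0q _)]
  calc (∫ q : E3, (∫ p : E3, f (q, p)) ^ ((4:ℝ)/3))
      ≤ ∫ q : E3, C * ∫ p : E3, ‖p‖ * f (q, p) :=
        integral_mono_ae hLint (hTint.const_mul C) key
    _ = C * ∫ q : E3, ∫ p : E3, ‖p‖ * f (q, p) := integral_const_mul _ _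
    _ = C * ∫ x : E3 × E3, ‖x.2‖ * f x :=
        congrArg (C * ·) (integral_integral (f := fun q p => ‖p‖ * f (q, p)) hi)
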